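/- Let η = η₁ + iη₂ be in the first quadrant (η₁, η₂ ≥ 0, η ≠ 0) with log|η| > 1/2, and suppose η₂/η₁ < √(2 log|η|) (interpreting the condition as trivially satisfied when η₁ ≥ η₂). Then exp(−2π(η₁² − η₂²) arg η − 4π η₁ η₂ log|η| + 2π η₁ η₂) ≤ 1; equivalently |η^{s−1} e^{−πi η²}| ≤ 1 where s − 1 = 2πi η² and η^{s−1} = exp((s−1)(log|η| + i arg η)) with arg η ∈ [0, π/2]. -/

import Mathlib

open Real Complex

theorem stmt_18 (η : ℂ) (h1 : 0 ≤ η.re) (h2 : 0 ≤ η.im) (hη : η ≠ 0)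
    (hlog : 1 / 2 < Real.log (‖η‖))
    (hcond : η.im < η.re * Real.sqrt (2 * Real.log (‖η‖)) ∨ η.im ≤ η.re) :
    Real.exp (-2 * π * (η.re ^ 2 - η.im ^ 2) * Complex.arg η
        - 4 * π * η.re * η.im * Real.log (‖η‖)
        + 2 * π * η.re * η.im) ≤ 1
    ∧ ‖Complex.exp ((2 * π * Complex.I * η ^ 2)
          * (Real.log (‖η‖) + Complex.arg η * Complex.I))
        * Complex.exp (-(π * Complex.I) * η ^ 2)‖ ≤ 1 := by
  set a := η.re with hA
  set b := η.im with hB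
  set L := Real.log (‖η‖) with hL
  set θ := Complex.arg η with hT
  have ha : 0 < a := by
    rcases lt_or_eq_of_le h1 with h | h
    · exact h
    · exfalso
      have hb0 : b = 0 := by
        rcases hcond with hc | hc
        · nlinarith [Real.sqrt_nonneg (2 * L)]
        · linarith
      exact hη (Complex.ext (by simpa using h.symm) (by simpa using hb0))
  have hθ0 : 0 ≤ θ := Complex.arg_nonneg_iff.2 h2
  have hθlt : θ < π / 2 := by
    rcases lt_or_eq_of_le (Complex.arg_le_pi_div_two_iff.2 (Or.inl h1)) with h | h
    · exact h
    · exact absurd (Complex.arg_eq_pi_div_two_iff.1 h).1 ha.ne'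
  have htan : Real.tan θ = b / a := Complex.tan_arg η
  have hθle : a * θ ≤ b := by
    have := Real.le_tan hθ0 hθlt
    rw [htan] at this
    calc a * θ ≤ a * (b / a) := by nlinarith
    _ = b := by field_simp
  have hE : -2 * π * (a ^ 2 - b ^ 2) * θ - 4 * π * a * b * L + 2 * π * a * b ≤ 0 := by
    rcases le_or_gt b a with hba | hab
    · nlinarith [Real.pi_pos, mul_nonneg (mul_nonneg Real.pi_pos.le hθ0)
        (mul_nonneg (sub_nonneg.2 hba) (add_nonneg h2 (h2.trans hba))),
        mul_nonneg (mul_nonneg Real.pi_pos.le (mul_nonneg ha.le h2)) (by linarith : (0:ℝ) ≤ 2 * L - 1)]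
    · have hsq : b ^ 2 < 2 * a ^ 2 * L := by
        rcases hcond with hc | hc
        · have h2L : (0:ℝ) ≤ 2 * L := by linarith
          have := Real.sq_sqrt h2L
          nlinarith [Real.sqrt_nonneg (2 * L)]
        · linarith
      nlinarith [Real.pi_pos,
        mul_nonneg (mul_nonneg Real.pi_pos.le (sub_nonneg.2 hab.le |>.trans_eq rfl))
          (sub_nonneg.2 hθle),
        mul_pos Real.pi_pos (mul_pos (ha.trans_le hab.le) (sub_pos.2 hsq)),
        mul_nonneg (mul_nonneg Real.pi_pos.le (sub_nonneg.2 (by nlinarith : a^2 ≤ b^2))) (sub_nonneg.2 hθle)]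
  constructor
  · rw [Real.exp_le_one_iff]
    nlinarith [hE]
  · rw [← Complex.exp_add, Complex.norm_exp, Real.exp_le_one_iff]
    simp only [Complex.add_re, Complex.add_im, Complex.mul_re, Complex.mul_im, Complex.I_re, Complex.I_im,
      Complex.ofReal_re, Complex.ofReal_im, Complex.neg_re, Complex.neg_im, pow_two,
      Complex.mul_im, Complex.ofReal_mul, Complex.re_ofNat, Complex.im_ofNat]
    nlinarith [hE]
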